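/- arXiv:1708.07230 — 2 statements merged into one kernel-verified Lean document; each statement's English description precedes it below -/
import Mathlib

section
/- If for every prefix t' of a ground trace t the set approxΔ*({q₀}, t') contains no bad state of the DATE D, then t satisfies D, i.e. t ⊢ D. -/
open Classical

/-- A property automaton over states `Q` and alphabet `E`: a deterministic and
total transition relation is represented as a transition function. -/
structure PA (Q : Type*) (E : Type*) where
  init : Q
  bad : Set Q
  next : Q → E → Q

namespace PA

variable {Q E : Type*}

/-- Iterated application of the transition function along a ground trace. -/
def run (π : PA Q E) (q : Q) (t : List E) : Q := t.foldl π.next q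

/-- A ground trace satisfies a property automaton iff no prefix of it leads
from the initial state to a bad state. -/
def Sat (t : List E) (π : PA Q E) : Prop :=
  ∀ t' : List E, t' <+: t → π.run π.init t' ∉ π.bad

/-- Equivalence of two property automata with respect to a set of ground traces. -/
def EquivOn (T : Set (List E)) (π π' : PA Q E) : Prop :=
  ∀ t ∈ T, Sat t π ↔ Sat t π'

end PA

/-- A static program: a set of static parametrised traces over identifiers `α`,
together with a must-alias equivalence relation and a may-alias relation. -/
structure SProg (α : Type*) (E : Type*) where
  traces : Set (List (α × E))
  must : α → α → Prop
  may : α → α → Prop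
  must_equiv : Equivalence must
  must_sub_may : ∀ {x y : α}, must x y → may x y

namespace SProg

variable {α E : Type*}

-- Projection of a static parametrised trace onto an identifier `x`,
-- yielding the set of possible ground traces.
open Classical in
noncomputable def proj (P : SProg α E) (x : α) : List (α × E) → Set (List E)
  | [] => {[]}
  | (x', e) :: st =>
      if P.must x x' then (e :: ·) '' P.proj x st
      else if P.may x x' then P.proj x st ∪ (e :: ·) '' P.proj x st
      else P.proj x st

/-- The projection of a static program onto a single identifier. -/
def projId (P : SProg α E) (x : α) : Set (List E) :=
  {t | ∃ st ∈ P.traces, t ∈ P.proj x st}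

/-- The projection of a static program onto all identifiers (`P ⇓ OId`). -/
def projAll (P : SProg α E) : Set (List E) :=
  {t | ∃ st ∈ P.traces, ∃ x : α, t ∈ P.proj x st}

end SProg

/-- Satisfaction of a property automaton by a static parametrised trace:
every projection onto every identifier satisfies the automaton. -/
def PA.SSat {α Q E : Type*} (P : SProg α E) (st : List (α × E)) (π : PA Q E) : Prop :=
  ∀ x : α, ∀ t ∈ P.proj x st, PA.Sat t π

/-- Equivalence of two property automata with respect to a static program. -/
def PA.SEquiv {α Q E : Type*} (P : SProg α E) (π π' : PA Q E) : Prop :=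
  ∀ st ∈ P.traces, PA.SSat P st π ↔ PA.SSat P st π'

/-- A transition of a DATE: source state, event, condition, action, target state. -/
structure DTrans (Q : Type*) (E : Type*) (Θ : Type*) where
  src : Q
  ev : E
  cond : Θ → Bool
  act : Θ → Θ
  tgt : Q

/-- A DATE (without timers/channels): states `Q`, events `E`, monitoring
variable states `Θ`, initial state, initial monitoring state, bad states,
and a transition relation. -/
structure DATE (Q : Type*) (E : Type*) (Θ : Type*) where
  init : Q
  th0 : Θ
  bad : Set Q
  delta : Set (DTrans Q E Θ)

namespace DATE

variable {Q E Θ : Type*}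

/-- Determinism: from each state, any two distinct transitions with the same
event have conditions that are never simultaneously true. -/
def Deterministic (D : DATE Q E Θ) : Prop :=
  ∀ d ∈ D.delta, ∀ d' ∈ D.delta,
    d.src = d'.src → d.ev = d'.ev → d ≠ d' →
      ∀ θ : Θ, ¬(d.cond θ = true ∧ d'.cond θ = true)

/-- The concrete transition function `Δ`. -/
noncomputable def step (D : DATE Q E Θ) (s : Q × Θ) (e : E) : Q × Θ :=
  if h : ∃ d ∈ D.delta, d.src = s.1 ∧ d.ev = e ∧ d.cond s.2 = true
  then (h.choose.tgt, h.choose.act s.2)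
  else s

/-- `Δ*`: iterated concrete transition function along a ground trace. -/
noncomputable def run (D : DATE Q E Θ) (s : Q × Θ) (t : List E) : Q × Θ :=
  t.foldl D.step s

/-- A ground trace satisfies a DATE iff no prefix of it drives `Δ*` from the
initial configuration into a bad state. -/
def Sat (t : List E) (D : DATE Q E Θ) : Prop :=
  ∀ t' : List E, t' <+: t → (D.run (D.init, D.th0) t').1 ∉ D.bad

/-- Equivalence of two DATEs with respect to a set of ground traces. -/
def EquivOn (T : Set (List E)) (D D' : DATE Q E Θ) : Prop :=
  ∀ t ∈ T, Sat t D ↔ Sat t D'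

/-- The static transition relation `q →e_approx q'`. -/
def ApproxStep (D : DATE Q E Θ) (q : Q) (e : E) (q' : Q) : Prop :=
  (∃ d ∈ D.delta, d.src = q ∧ d.ev = e ∧ d.tgt = q' ∧ ¬ ∀ θ : Θ, d.cond θ = false)
  ∨ (q' = q ∧ ¬ ∃ d ∈ D.delta, d.src = q ∧ d.ev = e ∧ d.tgt ≠ q ∧ ∀ θ : Θ, d.cond θ = true)

/-- The static transition function on sets of states. -/
def approxSet (D : DATE Q E Θ) (S : Set Q) (e : E) : Set Q :=
  {q' | ∃ q ∈ S, D.ApproxStep q e q'}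

/-- `approxΔ*`: iterated static transition function along a ground trace. -/
def approxRun (D : DATE Q E Θ) (S : Set Q) (t : List E) : Set Q :=
  t.foldl D.approxSet S

/-- `q ↪ q'`: `q'` is reachable from `q` via the static transition relation. -/
def Reach (D : DATE Q E Θ) (q q' : Q) : Prop :=
  ∃ t : List E, q' ∈ D.approxRun {q} t

/-- `badAfter(q)`: `q` is reachable from the initial state and can reach a bad state. -/
def BadAfter (D : DATE Q E Θ) (q : Q) : Prop :=
  D.Reach D.init q ∧ ∃ q' ∈ D.bad, D.Reach q q'

/-- `goodEntryPoint(q)`. -/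
def GoodEntryPoint (D : DATE Q E Θ) (q : Q) : Prop :=
  ¬ D.BadAfter q ∧ ∃ q' : Q, ∃ e : E, D.BadAfter q' ∧ D.ApproxStep q' e q

/-- `useful(q)`. -/
def Useful (D : DATE Q E Θ) (q : Q) : Prop :=
  D.BadAfter q ∨ D.GoodEntryPoint q

/-- Restriction of a DATE to a set of transitions (`D ↾ δ'`). -/
def restrict (D : DATE Q E Θ) (δ' : Set (DTrans Q E Θ)) : DATE Q E Θ :=
  { D with delta := D.delta ∩ δ' }

/-- The reachability-reduced DATE `reach(D)`: only useful states and
transitions between useful states are kept. -/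
def reachReduce (D : DATE Q E Θ) : DATE Q E Θ :=
  D.restrict {d | D.Useful d.src ∧ D.Useful d.tgt}

/-- Alphabet restriction `D ↾ Σ'`. -/
def alphaRestrict (D : DATE Q E Θ) (A : Set E) : DATE Q E Θ :=
  D.restrict {d | d.ev ∈ A}

/-- `Σ(T)`: the set of events occurring in some trace of `T`. -/
def eventsOf (T : Set (List E)) : Set E :=
  {e | ∃ t ∈ T, e ∈ t}

/-- Component-wise union of two DATEs (sharing initial state and initial
monitoring state). -/
def union (D₁ D₂ : DATE Q E Θ) : DATE Q E Θ :=
  { init := D₁.init, th0 := D₁.th0, bad := D₁.bad ∪ D₂.bad,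
    delta := D₁.delta ∪ D₂.delta }

/-- Component-wise union of a family of DATEs, with given initial state and
initial monitoring state. -/
def unionFamily {ι : Type*} (q0 : Q) (θ0 : Θ) (f : ι → DATE Q E Θ) : DATE Q E Θ :=
  { init := q0, th0 := θ0, bad := ⋃ i, (f i).bad, delta := ⋃ i, (f i).delta }

/-- A ground trace `t` uses a transition `d`. -/
def Uses (D : DATE Q E Θ) (t : List E) (d : DTrans Q E Θ) : Prop :=
  (¬ ∀ θ : Θ, d.cond θ = false) ∧
    ∃ t' : List E, (t' ++ [d.ev]) <+: t ∧ d.src ∈ D.approxRun {D.init} t'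

/-- Satisfaction of a DATE by a static parametrised trace. -/
def SSat {α : Type*} (P : SProg α E) (st : List (α × E)) (D : DATE Q E Θ) : Prop :=
  ∀ x : α, ∀ t ∈ P.proj x st, Sat t D

/-- Equivalence of two DATEs with respect to a static program. -/
def SEquiv {α : Type*} (P : SProg α E) (D D' : DATE Q E Θ) : Prop :=
  ∀ st ∈ P.traces, SSat P st D ↔ SSat P st D'

end DATE

/-- Translation of a property automaton into a DATE with `Θ = Unit`:
each transition `(q, e, q')` becomes `q —e|true↦skip→ q'`. -/
def PA.toDATE {Q E : Type*} (π : PA Q E) : DATE Q E Unit :=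
  { init := π.init, th0 := (), bad := π.bad,
    delta := {d | d.cond = (fun _ => true) ∧ d.act = id ∧ d.tgt = π.next d.src d.ev} }

/-- The flow-sensitive residual `residual₂(D, P)`. -/
def DATE.residual2 {α Q E Θ : Type*} (D : DATE Q E Θ) (P : SProg α E) : DATE Q E Θ :=
  (D.restrict {d | ∃ t ∈ P.projAll, D.Uses t d}).reachReduce

/-- Consecutive application of the flow-sensitive residual over a list of
static program over-approximations. -/
def DATE.residual2List {α Q E Θ : Type*} (D : DATE Q E Θ) :
    List (SProg α E) → DATE Q E Θ
  | [] => D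
  | P :: Ps => DATE.residual2List (D.residual2 P) Ps

lemma DATE.step_mem_approxSet {Q E Θ : Type*} (D : DATE Q E Θ) (s : Q × Θ) (e : E)
    {S : Set Q} (hs : s.1 ∈ S) : (D.step s e).1 ∈ D.approxSet S e := by
  unfold DATE.step
  split
  · rename_i hex
    obtain ⟨hd, hsrc, hev, hcond⟩ := hex.choose_spec
    exact ⟨s.1, hs, Or.inl ⟨hex.choose, hd, hsrc, hev, rfl,
      fun hall => by simpa [hall s.2] using hcond⟩⟩
  · rename_i hnex
    refine ⟨s.1, hs, Or.inr ⟨rfl, fun ⟨d, hd, hsrc, hev, _, hall⟩ =>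
      hnex ⟨d, hd, hsrc, hev, hall s.2⟩⟩⟩

lemma DATE.run_mem_approxRun {Q E Θ : Type*} (D : DATE Q E Θ) (t : List E) :
    ∀ (s : Q × Θ) (S : Set Q), s.1 ∈ S → (D.run s t).1 ∈ D.approxRun S t := by
  induction t with
  | nil => intro s S hs; exact hs
  | cons e t ih =>
      intro s S hs
      exact ih (D.step s e) (D.approxSet S e) (D.step_mem_approxSet s e hs)

/-- If for every prefix `t'` of a ground trace `t` the set
`approxΔ*({q₀}, t')` contains no bad state, then `t ⊢ D`. -/
theorem sat_of_approxRun_no_bad {Q E Θ : Type*} (D : DATE Q E Θ)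
    (hdet : D.Deterministic) (t : List E)
    (h : ∀ t' : List E, t' <+: t → ∀ q ∈ D.approxRun {D.init} t', q ∉ D.bad) :
    DATE.Sat t D := by
  intro t' hpre
  exact h t' hpre _ (D.run_mem_approxRun t' (D.init, D.th0) {D.init} rfl)
end

section
/- Given sets of ground traces T₀, T₁ ⊆ Σ* and a DATE D, the component-wise union of the reachability-reduced alphabet-restrictions of D with respect to each set of traces is equivalent to D with respect to the union of the sets of traces: reach(D ↾ Σ(T₀)) ⊔ reach(D ↾ Σ(T₁)) ≅_{T₀ ∪ T₁} D. -/
open Classical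

section Aux

variable {Q E Θ : Type*}

namespace DATE

lemma fire_eq {D V : DATE Q E Θ} (hdet : D.Deterministic) (hV : V.delta ⊆ D.delta)
    {q : Q} {θ : Θ} {e : E} {d : DTrans Q E Θ} (hd : d ∈ V.delta) (hsrc : d.src = q)
    (hev : d.ev = e) (hc : d.cond θ = true) :
    V.step (q, θ) e = (d.tgt, d.act θ) := by
  have h : ∃ d' ∈ V.delta, d'.src = ((q, θ) : Q × Θ).1 ∧ d'.ev = e ∧
      d'.cond ((q, θ) : Q × Θ).2 = true := ⟨d, hd, hsrc, hev, hc⟩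
  rw [DATE.step, dif_pos h]
  have hch := h.choose_spec
  have heq : h.choose = d := by
    by_contra hne
    exact hdet _ (hV hch.1) _ (hV hd) (by rw [hch.2.1, hsrc]) (by rw [hch.2.2.1, hev]) hne θ
      ⟨hch.2.2.2, hc⟩
  rw [heq]

lemma nofire_eq {V : DATE Q E Θ} {q : Q} {θ : Θ} {e : E}
    (h : ¬ ∃ d ∈ V.delta, d.src = q ∧ d.ev = e ∧ d.cond θ = true) :
    V.step (q, θ) e = (q, θ) := by
  rw [DATE.step, dif_neg]
  exact h

lemma run_cons (V : DATE Q E Θ) (s : Q × Θ) (e : E) (t : List E) :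
    V.run s (e :: t) = V.run (V.step s e) t := rfl

lemma reach_refl (D' : DATE Q E Θ) (q : Q) : D'.Reach q q :=
  ⟨[], Set.mem_singleton q⟩

lemma reach_step {D' : DATE Q E Θ} {q q' q'' : Q} {e : E}
    (h : D'.Reach q q') (ha : D'.ApproxStep q' e q'') : D'.Reach q q'' := by
  obtain ⟨t, ht⟩ := h
  refine ⟨t ++ [e], ?_⟩
  rw [DATE.approxRun, List.foldl_append]
  exact ⟨q', ht, ha⟩

/-- The step of a DATE either stays or fires one of its transitions. -/
lemma step_cases (V : DATE Q E Θ) (q : Q) (θ : Θ) (e : E) :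
    V.step (q, θ) e = (q, θ) ∨
      ∃ d ∈ V.delta, d.src = q ∧ d.ev = e ∧ d.cond θ = true ∧
        V.step (q, θ) e = (d.tgt, d.act θ) := by
  by_cases h : ∃ d ∈ V.delta, d.src = ((q, θ) : Q × Θ).1 ∧ d.ev = e ∧
      d.cond ((q, θ) : Q × Θ).2 = true
  · right
    exact ⟨h.choose, h.choose_spec.1, h.choose_spec.2.1, h.choose_spec.2.2.1,
      h.choose_spec.2.2.2, by rw [DATE.step, dif_pos h]⟩
  · left
    rw [DATE.step, dif_neg h]

/-- A firing transition of a sub-DATE with event in `A` gives a static step of `D ↾ A`. -/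
lemma approxStep_of_fire {D V : DATE Q E Θ} (hV : V.delta ⊆ D.delta) {A : Set E}
    {d : DTrans Q E Θ} {q : Q} {θ : Θ} {e : E} (hd : d ∈ V.delta) (hsrc : d.src = q)
    (hev : d.ev = e) (heA : e ∈ A) (hc : d.cond θ = true) :
    (D.alphaRestrict A).ApproxStep q e d.tgt := by
  refine Or.inl ⟨d, ⟨hV hd, by simpa [DATE.alphaRestrict, DATE.restrict, hev] using heA⟩,
    hsrc, hev, rfl, fun hall => ?_⟩
  have := hall θ
  rw [hc] at this
  simp at this

/-- Any run of a sub-DATE of `D` on a trace over `A` stays inside the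
states statically reachable in `D ↾ A`. -/
lemma run_reach {D V : DATE Q E Θ} (hV : V.delta ⊆ D.delta) {A : Set E} :
    ∀ (t : List E) (q : Q) (θ : Θ) (p : Q), (∀ e ∈ t, e ∈ A) →
      (D.alphaRestrict A).Reach p q → (D.alphaRestrict A).Reach p (V.run (q, θ) t).1 := by
  intro t
  induction t with
  | nil => intro q θ p _ h; exact h
  | cons e t ih =>
    intro q θ p hev hr
    have hev' : ∀ e' ∈ t, e' ∈ A := fun e' he' => hev e' (List.mem_cons_of_mem _ he')
    rcases step_cases V q θ e with hstep | ⟨d, hd, hsrc, hevd, hc, hstep⟩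
    · rw [run_cons, hstep]
      exact ih q θ p hev' hr
    · rw [run_cons, hstep]
      exact ih d.tgt (d.act θ) p hev'
        (reach_step hr (approxStep_of_fire hV hd hsrc hevd (hev e (List.mem_cons_self)) hc))

/-- As long as the concrete run of `D` eventually hits a bad state, every fired
transition is kept by the reachability reduction, so a sandwiched DATE `U`
runs in lockstep with `D`. -/
lemma run_sync {D U : DATE Q E Θ} (hdet : D.Deterministic) {A : Set E}
    (hU : U.delta ⊆ D.delta)
    (hRU : (D.alphaRestrict A).reachReduce.delta ⊆ U.delta) :
    ∀ (t : List E) (q : Q) (θ : Θ), (∀ e ∈ t, e ∈ A) →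
      (D.alphaRestrict A).Reach D.init q → (D.run (q, θ) t).1 ∈ D.bad →
      U.run (q, θ) t = D.run (q, θ) t := by
  intro t
  induction t with
  | nil => intro q θ _ _ _; rfl
  | cons e t ih =>
    intro q θ hev hr hbad
    have hev' : ∀ e' ∈ t, e' ∈ A := fun e' he' => hev e' (List.mem_cons_of_mem _ he')
    have heA : e ∈ A := hev e (List.mem_cons_self)
    by_cases h : ∃ d ∈ D.delta, d.src = q ∧ d.ev = e ∧ d.cond θ = true
    · obtain ⟨d, hd, hsrc, hevd, hc⟩ := h
      have hDstep : D.step (q, θ) e = (d.tgt, d.act θ) :=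
        fire_eq hdet (fun _ h => h) hd hsrc hevd hc
      have happrox : (D.alphaRestrict A).ApproxStep q e d.tgt :=
        approxStep_of_fire (fun _ h => h) hd hsrc hevd heA hc
      have hbad' : (D.run (d.tgt, d.act θ) t).1 ∈ D.bad := by
        rw [run_cons, hDstep] at hbad; exact hbad
      -- the fired transition is useful, hence kept
      have hreachbad : (D.alphaRestrict A).Reach q (D.run (q, θ) (e :: t)).1 :=
        run_reach (fun _ h => h) (e :: t) q θ q hev (reach_refl _ q)
      have hbadAfterSrc : (D.alphaRestrict A).BadAfter d.src := by
        rw [hsrc]; exact ⟨hr, _, hbad, hreachbad⟩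
      have hbadAfterTgt : (D.alphaRestrict A).BadAfter d.tgt := by
        refine ⟨reach_step hr happrox, (D.run (d.tgt, d.act θ) t).1, hbad', ?_⟩
        exact run_reach (fun _ h => h) t d.tgt (d.act θ) d.tgt hev' (reach_refl _ _)
      have hdU : d ∈ U.delta := by
        refine hRU ⟨⟨hd, ?_⟩, Or.inl hbadAfterSrc, Or.inl hbadAfterTgt⟩
        simpa [DATE.alphaRestrict, DATE.restrict, hevd] using heA
      have hUstep : U.step (q, θ) e = (d.tgt, d.act θ) :=
        fire_eq hdet hU hdU hsrc hevd hc
      rw [run_cons, run_cons, hDstep, hUstep]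
      exact ih d.tgt (d.act θ) hev' (reach_step hr happrox) hbad'
    · have hD : D.step (q, θ) e = (q, θ) := nofire_eq h
      have hU' : U.step (q, θ) e = (q, θ) :=
        nofire_eq fun ⟨d, hd, hrest⟩ => h ⟨d, hU hd, hrest⟩
      rw [run_cons, run_cons, hD, hU']
      have hbad' : (D.run (q, θ) t).1 ∈ D.bad := by rw [run_cons, hD] at hbad; exact hbad
      exact ih q θ hev' hr hbad'

/-- If no bad state is statically reachable from `q` in `D ↾ A`, then any
sub-DATE of `D` is safe from `q` on traces over `A`. -/
lemma nobad_safe {D U : DATE Q E Θ} (hU : U.delta ⊆ D.delta) {A : Set E} {q : Q}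
    (hnb : ¬ ∃ b ∈ D.bad, (D.alphaRestrict A).Reach q b) (t : List E) (θ : Θ)
    (ht : ∀ e ∈ t, e ∈ A) : (U.run (q, θ) t).1 ∉ D.bad :=
  fun hmem => hnb ⟨_, hmem, run_reach hU t q θ q ht (reach_refl _ _)⟩

/-- Core safety transfer: if the run of `D` from `(q, θ)` is safe on all
prefixes of `t`, then so is the run of a sandwiched `U`. -/
lemma sync_safe {D U : DATE Q E Θ} (hdet : D.Deterministic) {A : Set E}
    (hU : U.delta ⊆ D.delta)
    (hRU : (D.alphaRestrict A).reachReduce.delta ⊆ U.delta) :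
    ∀ (t : List E) (q : Q) (θ : Θ), (∀ e ∈ t, e ∈ A) →
      (D.alphaRestrict A).Reach D.init q →
      (∀ s : List E, s <+: t → (D.run (q, θ) s).1 ∉ D.bad) →
      ∀ s : List E, s <+: t → (U.run (q, θ) s).1 ∉ D.bad := by
  intro t
  induction t with
  | nil =>
    intro q θ _ _ hD s hs
    rw [List.prefix_nil] at hs
    subst hs
    exact hD [] List.nil_prefix
  | cons e t ih =>
    intro q θ hev hr hD s hs
    have hev' : ∀ e' ∈ t, e' ∈ A := fun e' he' => hev e' (List.mem_cons_of_mem _ he')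
    have heA : e ∈ A := hev e (List.mem_cons_self)
    cases s with
    | nil => exact hD [] List.nil_prefix
    | cons e' s' =>
      rw [List.cons_prefix_cons] at hs
      obtain ⟨he, hs'⟩ := hs
      rw [he]
      by_cases h : ∃ d ∈ D.delta, d.src = q ∧ d.ev = e ∧ d.cond θ = true
      · by_cases hb : ∃ b ∈ D.bad, (D.alphaRestrict A).Reach q b
        · -- `q` can still reach a bad state: the fired transition is useful
          obtain ⟨d, hd, hsrc, hevd, hc⟩ := h
          have hDstep : D.step (q, θ) e = (d.tgt, d.act θ) :=
            fire_eq hdet (fun _ h => h) hd hsrc hevd hc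
          have happrox : (D.alphaRestrict A).ApproxStep q e d.tgt :=
            approxStep_of_fire (fun _ h => h) hd hsrc hevd heA hc
          have hbadAfterSrc : (D.alphaRestrict A).BadAfter d.src := by rw [hsrc]; exact ⟨hr, hb⟩
          have hUsefulTgt : (D.alphaRestrict A).Useful d.tgt := by
            by_cases hbt : (D.alphaRestrict A).BadAfter d.tgt
            · exact Or.inl hbt
            · refine Or.inr ⟨hbt, d.src, e, hbadAfterSrc, ?_⟩
              rw [hsrc]; exact happrox
          have hdU : d ∈ U.delta := by
            refine hRU ⟨⟨hd, ?_⟩, Or.inl hbadAfterSrc, hUsefulTgt⟩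
            simpa [DATE.alphaRestrict, DATE.restrict, hevd] using heA
          have hUstep : U.step (q, θ) e = (d.tgt, d.act θ) :=
            fire_eq hdet hU hdU hsrc hevd hc
          have hD' : ∀ s'' : List E, s'' <+: t → (D.run (d.tgt, d.act θ) s'').1 ∉ D.bad := by
            intro s'' hs''
            have := hD (e :: s'') (List.cons_prefix_cons.mpr ⟨rfl, hs''⟩)
            rw [run_cons, hDstep] at this
            exact this
          have := ih d.tgt (d.act θ) hev' (reach_step hr happrox) hD' s' hs'
          rw [run_cons, hUstep]
          exact this
        · -- no bad state reachable from `q` anymore: safe regardless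
          exact nobad_safe hU hb (e :: s') θ
            (fun e'' he'' => hev e'' ((List.cons_prefix_cons.mpr ⟨rfl, hs'⟩).subset he''))
      · have hDstep : D.step (q, θ) e = (q, θ) := nofire_eq h
        have hUstep : U.step (q, θ) e = (q, θ) :=
          nofire_eq fun ⟨d, hd, hrest⟩ => h ⟨d, hU hd, hrest⟩
        have hD' : ∀ s'' : List E, s'' <+: t → (D.run (q, θ) s'').1 ∉ D.bad := by
          intro s'' hs''
          have := hD (e :: s'') (List.cons_prefix_cons.mpr ⟨rfl, hs''⟩)
          rw [run_cons, hDstep] at this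
          exact this
        have := ih q θ hev' hr hD' s' hs'
        rw [run_cons, hUstep]
        exact this

/-- The sandwich equivalence lemma. -/
lemma equiv_of_sandwich {D U : DATE Q E Θ} (hdet : D.Deterministic) {A : Set E}
    (hinit : U.init = D.init) (hth : U.th0 = D.th0) (hbad : U.bad = D.bad)
    (hU : U.delta ⊆ D.delta)
    (hRU : (D.alphaRestrict A).reachReduce.delta ⊆ U.delta)
    {t : List E} (ht : ∀ e ∈ t, e ∈ A) : DATE.Sat t U ↔ DATE.Sat t D := by
  constructor
  · intro hSU t' htp
    by_contra hbadm
    have hev : ∀ e ∈ t', e ∈ A := fun e he => ht e (htp.subset he)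
    have hsync := run_sync hdet hU hRU t' D.init D.th0 hev (reach_refl _ _) hbadm
    exact hSU t' htp (by rw [hinit, hth, hsync, hbad]; exact hbadm)
  · intro hSD t' htp
    have := sync_safe hdet hU hRU t D.init D.th0 ht (reach_refl _ _) hSD t' htp
    rw [hinit, hth, hbad]
    exact this

end DATE

end Aux

/-- `reach(D ↾ Σ(T₀)) ⊔ reach(D ↾ Σ(T₁)) ≅_{T₀ ∪ T₁} D`. -/
theorem union_of_residuals_equiv {Q E Θ : Type*} (D : DATE Q E Θ)
    (hdet : D.Deterministic) (T₀ T₁ : Set (List E)) :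
    DATE.EquivOn (T₀ ∪ T₁)
      (DATE.union (D.alphaRestrict (DATE.eventsOf T₀)).reachReduce
                  (D.alphaRestrict (DATE.eventsOf T₁)).reachReduce)
      D := by
  intro t ht
  set R₀ := (D.alphaRestrict (DATE.eventsOf T₀)).reachReduce with hR₀
  set R₁ := (D.alphaRestrict (DATE.eventsOf T₁)).reachReduce with hR₁
  have hsub₀ : R₀.delta ⊆ D.delta := fun d hd => hd.1.1
  have hsub₁ : R₁.delta ⊆ D.delta := fun d hd => hd.1.1
  have hU : (DATE.union R₀ R₁).delta ⊆ D.delta := Set.union_subset hsub₀ hsub₁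
  have hinit : (DATE.union R₀ R₁).init = D.init := rfl
  have hth : (DATE.union R₀ R₁).th0 = D.th0 := rfl
  have hbad : (DATE.union R₀ R₁).bad = D.bad := Set.union_self D.bad
  cases ht with
  | inl ht =>
    exact DATE.equiv_of_sandwich hdet hinit hth hbad hU
      (Set.subset_union_left (s := R₀.delta) (t := R₁.delta))
      (fun e he => ⟨t, ht, he⟩)
  | inr ht =>
    exact DATE.equiv_of_sandwich hdet hinit hth hbad hU
      (Set.subset_union_right (s := R₀.delta) (t := R₁.delta))
      (fun e he => ⟨t, ht, he⟩)
end
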